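/- Let S be an infinite set with DC_S. Define μ_S to consist of all A ⊆ [S]^ω such that Player II has a winning quasi-strategy in the club game on S with payoff A (players alternate playing elements of S for ω rounds, and Player II wins iff the set of all elements played belongs to A). Then μ_S is a filter on [S]^ω. -/

import Mathlib

open Set

universe u

/-- The collection `[S]^ω` of countable subsets of `S`. -/
abbrev Cw (S : Type u) := {σ : Set S // σ.Countable}

/-- Dependent choice for the set `S`. -/
def DCax (S : Type u) : Prop :=
  ∀ R : S → S → Prop, (∀ x, ∃ y, R x y) →
    ∀ x : S, ∃ f : ℕ → S, f 0 = x ∧ ∀ n, R (f n) (f (n + 1))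

/-- `F` is a filter on `[S]^ω`: contains everything, upward closed, closed under
binary intersections. -/
def IsSetFilter (S : Type u) (F : Set (Set (Cw S))) : Prop :=
  Set.univ ∈ F ∧ (∀ A B : Set (Cw S), A ∈ F → A ⊆ B → B ∈ F) ∧
    (∀ A B : Set (Cw S), A ∈ F → B ∈ F → A ∩ B ∈ F)

/-- `F` is fine. -/
def IsFine (S : Type u) (F : Set (Set (Cw S))) : Prop :=
  ∀ τ : Cw S, {σ : Cw S | τ.1 ⊆ σ.1} ∈ F

/-- `F` has the diagonal intersection property. -/
def HasDiagInter (S : Type u) (F : Set (Set (Cw S))) : Prop :=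
  ∀ B : S → Set (Cw S), (∀ a : S, B a ∈ F) →
    {σ : Cw S | ∀ a ∈ σ.1, σ ∈ B a} ∈ F

/-- `F` is normal: every regressive-like assignment on an `F`-positive set is
constant-containing on an `F`-positive set. -/
def IsNormalFilter (S : Type u) (F : Set (Set (Cw S))) : Prop :=
  ∀ A : Set (Cw S), Aᶜ ∉ F →
    ∀ G : Cw S → Cw S, (∀ σ ∈ A, (G σ).1.Nonempty ∧ (G σ).1 ⊆ σ.1) →
      ∃ a : S, {σ : Cw S | σ ∈ A ∧ a ∈ (G σ).1}ᶜ ∉ F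

/-- A supercompactness measure on `[S]^ω`: a (proper) normal fine ultrafilter. -/
def IsSCMeasure (S : Type u) (F : Set (Set (Cw S))) : Prop :=
  IsSetFilter S F ∧ ∅ ∉ F ∧ IsFine S F ∧ HasDiagInter S F ∧
    ∀ A : Set (Cw S), A ∈ F ∨ Aᶜ ∈ F

/-- A quasi-strategy for Player II (who moves at odd-length-so-far positions,
i.e. positions of odd length are II's turn... here: II moves when the current
position has odd length). -/
def IsQStratII (S : Type u) (T : Set (List S)) : Prop :=
  [] ∈ T ∧ (∀ p ∈ T, Even p.length → ∀ a : S, p ++ [a] ∈ T) ∧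
    (∀ p ∈ T, ¬ Even p.length → ∃ b : S, p ++ [b] ∈ T)

/-- A quasi-strategy for Player I. -/
def IsQStratI (S : Type u) (T : Set (List S)) : Prop :=
  [] ∈ T ∧ (∀ p ∈ T, ¬ Even p.length → ∀ b : S, p ++ [b] ∈ T) ∧
    (∀ p ∈ T, Even p.length → ∃ a : S, p ++ [a] ∈ T)

/-- The infinite play `f` is consistent with the tree `T`. -/
def PlayThrough (S : Type u) (T : Set (List S)) (f : ℕ → S) : Prop :=
  ∀ n : ℕ, (List.ofFn fun i : Fin n => f i) ∈ T

/-- The countable set of all elements played in the play `f`. -/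
def playSet (S : Type u) (f : ℕ → S) : Cw S :=
  ⟨Set.range f, Set.countable_range f⟩

/-- `T` is a winning quasi-strategy for Player II in the club game on `S` with payoff `A`. -/
def WinsClubII (S : Type u) (T : Set (List S)) (A : Set (Cw S)) : Prop :=
  IsQStratII S T ∧ ∀ f : ℕ → S, PlayThrough S T f → playSet S f ∈ A

/-- `T` is a winning quasi-strategy for Player I in the club game on `S` with payoff `A`
(for Player II). -/
def WinsClubI (S : Type u) (T : Set (List S)) (A : Set (Cw S)) : Prop :=
  IsQStratI S T ∧ ∀ f : ℕ → S, PlayThrough S T f → playSet S f ∉ A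

/-- The quasi-club filter `μ_S`. -/
def qclub (S : Type u) : Set (Set (Cw S)) :=
  {A | ∃ T : Set (List S), WinsClubII S T A}

/-- Winning quasi-strategy for Player II in the length-ω game on `S` with payoff `A ⊆ S^ω`. -/
def WinsGameQSII (S : Type u) (T : Set (List S)) (A : Set (ℕ → S)) : Prop :=
  IsQStratII S T ∧ ∀ f : ℕ → S, PlayThrough S T f → f ∈ A

/-- Winning quasi-strategy for Player I in the length-ω game on `S` with payoff `A ⊆ S^ω`
(for Player II). -/
def WinsGameQSI (S : Type u) (T : Set (List S)) (A : Set (ℕ → S)) : Prop :=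
  IsQStratI S T ∧ ∀ f : ℕ → S, PlayThrough S T f → f ∉ A

/-- The play `f` follows the strategy `s` for Player I (who moves at even rounds). -/
def StratFollowsI (S : Type u) (s : List S → S) (f : ℕ → S) : Prop :=
  ∀ n : ℕ, Even n → f n = s (List.ofFn fun i : Fin n => f i)

/-- The play `f` follows the strategy `s` for Player II (who moves at odd rounds). -/
def StratFollowsII (S : Type u) (s : List S → S) (f : ℕ → S) : Prop :=
  ∀ n : ℕ, ¬ Even n → f n = s (List.ofFn fun i : Fin n => f i)

/-- `AD_ℝ`: every length-ω two-player game with moves from `ℝ` is determined. -/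
def ADReal : Prop :=
  ∀ A : Set (ℕ → ℝ),
    (∃ s : List ℝ → ℝ, ∀ f : ℕ → ℝ, StratFollowsI ℝ s f → f ∉ A) ∨
    (∃ s : List ℝ → ℝ, ∀ f : ℕ → ℝ, StratFollowsII ℝ s f → f ∈ A)


namespace QClubAux

variable {S : Type u} [Nonempty S]

omit [Nonempty S] in
lemma ofFn_succ_eq (f : ℕ → S) (n : ℕ) :
    (List.ofFn fun i : Fin (n+1) => f i) = (List.ofFn fun i : Fin n => f i) ++ [f n] := by
  rw [List.ofFn_succ']; simp [List.concat_eq_append]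

omit [Nonempty S] in
lemma getD_ofFn (f : ℕ → S) {n k : ℕ} (hk : k < n) (d : S) :
    (List.ofFn fun i : Fin n => f i).getD k d = f k := by
  rw [List.getD_eq_getElem?_getD]; simp [List.getElem?_ofFn, hk]

/-- From a winning quasi-strategy for II, extract a "winning strategy" for II. -/
lemma exists_strat {T : Set (List S)} {A : Set (Cw S)} (h : WinsClubII S T A) :
    ∃ s : List S → S, ∀ f, StratFollowsII S s f → playSet S f ∈ A := by
  classical
  set d := Classical.arbitrary S
  refine ⟨fun p => if hp : p ∈ T ∧ ¬ Even p.length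
      then Classical.choose (h.1.2.2 p hp.1 hp.2) else d, ?_⟩
  intro f hf
  apply h.2
  intro n
  induction n with
  | zero => simpa using h.1.1
  | succ n ih =>
    rw [ofFn_succ_eq]
    by_cases he : Even n
    · exact h.1.2.1 _ ih (by simpa using he) (f n)
    · have hcond : (List.ofFn fun i : Fin n => f i) ∈ T ∧
          ¬ Even (List.ofFn fun i : Fin n => f i).length := ⟨ih, by simpa using he⟩
      have hfn := hf n he
      beta_reduce at hfn
      rw [hfn, dif_pos hcond]
      exact Classical.choose_spec (h.1.2.2 _ hcond.1 hcond.2)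

omit [Nonempty S] in
/-- From a "winning strategy" for II, get a winning quasi-strategy, hence membership in `qclub`. -/
lemma qclub_of_strat (s : List S → S) (A : Set (Cw S))
    (h : ∀ f, StratFollowsII S s f → playSet S f ∈ A) : A ∈ qclub S := by
  classical
  refine ⟨{p : List S | ∀ k, ¬ Even k → k < p.length → p[k]? = some (s (p.take k))},
    ⟨?_, ?_, ?_⟩, ?_⟩
  · intro k _ hk; simp at hk
  · intro p hp hev a k hodd hk
    simp only [List.length_append, List.length_cons, List.length_nil] at hk
    rcases lt_or_eq_of_le (Nat.lt_succ_iff.mp hk) with hlt | heq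
    · rw [List.getElem?_append_left hlt, List.take_append_of_le_length (le_of_lt hlt)]
      exact hp k hodd hlt
    · exact absurd (heq ▸ hev) hodd
  · intro p hp hodd
    refine ⟨s p, fun k hk hklt => ?_⟩
    simp only [List.length_append, List.length_cons, List.length_nil] at hklt
    rcases lt_or_eq_of_le (Nat.lt_succ_iff.mp hklt) with hlt | heq
    · rw [List.getElem?_append_left hlt, List.take_append_of_le_length (le_of_lt hlt)]
      exact hp k hk hlt
    · subst heq
      rw [List.getElem?_concat_length, List.take_left]
  · intro f hf
    apply h f
    intro n hodd
    have h1 := hf (n+1) n hodd (by simp)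
    have h2 : (List.ofFn fun i : Fin (n+1) => f i)[n]? = some (f n) := by
      rw [ofFn_succ_eq]
      have := List.getElem?_concat_length (l := List.ofFn fun i : Fin n => f i) (a := f n)
      simpa using this
    have h3 : (List.ofFn fun i : Fin (n+1) => f i).take n
        = List.ofFn fun i : Fin n => f i := by
      rw [ofFn_succ_eq, List.take_append_of_le_length (by simp), List.take_of_length_le (by simp)]
    rw [h2, h3] at h1
    exact Option.some_injective _ h1

/-- There is a play following any given strategy for II. -/
lemma exists_follows (s : List S → S) : ∃ f : ℕ → S, StratFollowsII S s f := by
  classical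
  set d := Classical.arbitrary S with hd
  let q : ℕ → List S := fun n => Nat.rec [] (fun n p => p ++ [if Even n then d else s p]) n
  have hq : ∀ n, q (n+1) = q n ++ [if Even n then d else s (q n)] := fun n => rfl
  have hlen : ∀ n, (q n).length = n := by
    intro n; induction n with
    | zero => rfl
    | succ n ih => rw [hq]; simp [ih]
  set f : ℕ → S := fun n => (q (n+1)).getD n d with hf
  have hgd : ∀ n, (q (n+1)).getD n d = if Even n then d else s (q n) := by
    intro n
    have h := List.getElem?_concat_length (l := q n) (a := if Even n then d else s (q n))
    rw [hlen n] at h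
    rw [hq, List.getD_eq_getElem?_getD, h]
    rfl
  have hof : ∀ n, (List.ofFn fun i : Fin n => f i) = q n := by
    intro n; induction n with
    | zero => rfl
    | succ n ih =>
      rw [ofFn_succ_eq, ih, hq]
      congr 1
      rw [show f n = (q (n+1)).getD n d from rfl, hgd]
  refine ⟨f, fun n hn => ?_⟩
  rw [hof n, show f n = (q (n+1)).getD n d from rfl, hgd, if_neg hn]

/-- Strategy-merging: II can simultaneously simulate two strategies while producing
plays with the same range. -/
lemma merge_exists (s₁ s₂ : List S → S) :
    ∃ s : List S → S, ∀ f, StratFollowsII S s f →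
      (∃ y, StratFollowsII S s₁ y ∧ Set.range y = Set.range f) ∧
      (∃ z, StratFollowsII S s₂ z ∧ Set.range z = Set.range f) := by
  classical
  set d := Classical.arbitrary S with hd
  set g : ℕ → ℕ := fun k => (Nat.unpair k).1 with hg
  have hg_le : ∀ k, g k ≤ k := fun k => Nat.unpair_left_le k
  have hg_surj : ∀ m, ∃ k, g k = m := fun m => ⟨Nat.pair m 0, by simp [hg]⟩
  set sim₁ : List S → List S := fun p =>
    List.ofFn fun i : Fin ((p.length + 1) / 2) =>
      if Even (i : ℕ) then p.getD (g ((i : ℕ) / 2)) d else p.getD (2 * (i : ℕ) - 1) d with hsim₁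
  set sim₂ : List S → List S := fun p =>
    List.ofFn fun i : Fin ((p.length - 1) / 2) =>
      if Even (i : ℕ) then p.getD (g ((i : ℕ) / 2)) d else p.getD (2 * (i : ℕ) + 1) d with hsim₂
  refine ⟨fun p => if p.length % 4 = 1 then s₁ (sim₁ p)
    else if p.length % 4 = 3 then s₂ (sim₂ p) else d, ?_⟩
  intro f hf
  constructor
  · -- game 1
    refine ⟨fun n => if Even n then f (g (n / 2)) else f (2 * n - 1), ?_, ?_⟩
    · intro m hm
      beta_reduce
      have hm1 : m % 2 = 1 := Nat.not_even_iff.mp hm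
      have hodd : ¬ Even (2 * m - 1) := by rw [Nat.not_even_iff]; omega
      have hkey := hf (2 * m - 1) hodd
      beta_reduce at hkey
      rw [if_neg hm]
      rw [hkey]
      have hlen : (List.ofFn fun i : Fin (2 * m - 1) => f i).length = 2 * m - 1 := by simp
      rw [if_pos (by rw [hlen]; omega)]
      congr 1
      apply List.ext_getElem
      · simp only [hsim₁, List.length_ofFn]; omega
      · intro i h1 h2
        simp only [hsim₁, List.getElem_ofFn]
        have hi : i < m := by simpa using h2
        by_cases hie : Even i
        · rw [if_pos hie, if_pos hie,
            getD_ofFn f (show g (i / 2) < 2 * m - 1 by have := hg_le (i / 2); omega) d]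
        · have hi1 : i % 2 = 1 := Nat.not_even_iff.mp hie
          rw [if_neg hie, if_neg hie,
            getD_ofFn f (show 2 * i - 1 < 2 * m - 1 by omega) d]
    · apply Set.Subset.antisymm
      · rintro x ⟨n, rfl⟩
        beta_reduce
        by_cases hn : Even n
        · rw [if_pos hn]; exact ⟨g (n / 2), rfl⟩
        · rw [if_neg hn]; exact ⟨2 * n - 1, rfl⟩
      · rintro x ⟨m, rfl⟩
        obtain ⟨k, hk⟩ := hg_surj m
        refine ⟨2 * k, ?_⟩
        beta_reduce
        rw [if_pos (even_two_mul k)]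
        rw [Nat.mul_div_cancel_left k (by norm_num), hk]
  · -- game 2
    refine ⟨fun n => if Even n then f (g (n / 2)) else f (2 * n + 1), ?_, ?_⟩
    · intro m hm
      beta_reduce
      have hm1 : m % 2 = 1 := Nat.not_even_iff.mp hm
      have hodd : ¬ Even (2 * m + 1) := by rw [Nat.not_even_iff]; omega
      have hkey := hf (2 * m + 1) hodd
      beta_reduce at hkey
      rw [if_neg hm]
      rw [hkey]
      have hlen : (List.ofFn fun i : Fin (2 * m + 1) => f i).length = 2 * m + 1 := by simp
      rw [if_neg (by rw [hlen]; omega), if_pos (by rw [hlen]; omega)]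
      congr 1
      apply List.ext_getElem
      · simp only [hsim₂, List.length_ofFn]; omega
      · intro i h1 h2
        simp only [hsim₂, List.getElem_ofFn]
        have hi : i < m := by simpa using h2
        by_cases hie : Even i
        · rw [if_pos hie, if_pos hie,
            getD_ofFn f (show g (i / 2) < 2 * m + 1 by have := hg_le (i / 2); omega) d]
        · rw [if_neg hie, if_neg hie,
            getD_ofFn f (show 2 * i + 1 < 2 * m + 1 by omega) d]
    · apply Set.Subset.antisymm
      · rintro x ⟨n, rfl⟩
        beta_reduce
        by_cases hn : Even n
        · rw [if_pos hn]; exact ⟨g (n / 2), rfl⟩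
        · rw [if_neg hn]; exact ⟨2 * n + 1, rfl⟩
      · rintro x ⟨m, rfl⟩
        obtain ⟨k, hk⟩ := hg_surj m
        refine ⟨2 * k, ?_⟩
        beta_reduce
        rw [if_pos (even_two_mul k)]
        rw [Nat.mul_div_cancel_left k (by norm_num), hk]

end QClubAux

/-- the quasi-club filter `μ_S` is a (proper) filter on `[S]^ω`. -/
theorem qclub_isFilter (S : Type u) [Infinite S] (hDC : DCax S) :
    IsSetFilter S (qclub S) ∧ ∅ ∉ qclub S := by
  classical
  have hne : Nonempty S := inferInstance
  refine ⟨⟨?_, ?_, ?_⟩, ?_⟩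
  · -- univ
    refine ⟨Set.univ, ⟨trivial, fun _ _ _ _ => trivial, fun _ _ _ => ⟨Classical.arbitrary S, trivial⟩⟩,
      fun _ _ => trivial⟩
  · -- upward closed
    rintro A B ⟨T, hT, hw⟩ hAB
    exact ⟨T, hT, fun f hf => hAB (hw f hf)⟩
  · -- intersection
    rintro A B hA hB
    obtain ⟨T₁, h₁⟩ := hA
    obtain ⟨T₂, h₂⟩ := hB
    obtain ⟨s₁, hs₁⟩ := QClubAux.exists_strat h₁
    obtain ⟨s₂, hs₂⟩ := QClubAux.exists_strat h₂
    obtain ⟨s, hs⟩ := QClubAux.merge_exists s₁ s₂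
    apply QClubAux.qclub_of_strat s
    intro f hf
    obtain ⟨⟨y, hy, hyr⟩, ⟨z, hz, hzr⟩⟩ := hs f hf
    constructor
    · have := hs₁ y hy
      have hps : playSet S y = playSet S f := Subtype.ext hyr
      rwa [hps] at this
    · have := hs₂ z hz
      have hps : playSet S z = playSet S f := Subtype.ext hzr
      rwa [hps] at this
  · -- properness
    rintro ⟨T, hT⟩
    obtain ⟨s, hs⟩ := QClubAux.exists_strat hT
    obtain ⟨f, hf⟩ := QClubAux.exists_follows s
    exact hs f hf
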